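/- Let R be a ring with stable range 1. Then every invertible 2×2 matrix over R is a product of elementary matrices and diagonal matrices with unit diagonal entries; i.e., every element of GL₂(R) lies in the subgroup of GL₂(R) generated by the elementary matrices I + c·eᵢⱼ (c ∈ R, i ≠ j) together with the diagonal matrices diag(u, v) with u, v units of R. -/

import Mathlib

open Matrix

def elemU {R : Type*} [Ring R] (i j : Fin 2) (h : i ≠ j) (c : R) :
    (Matrix (Fin 2) (Fin 2) R)ˣ where
  val := 1 + single i j c
  inv := 1 + single i j (-c)
  val_inv := by
    have h0 : single i j c * single i j (-c) = 0 :=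
      single_mul_single_of_ne _ _ _ _ h.symm _
    have h1 : single i j c + single i j (-c) = 0 := by
      rw [← single_add]; simp
    rw [mul_add, add_mul, add_mul, mul_one, one_mul, h0]
    rw [mul_one, add_zero, add_assoc, h1, add_zero]
  inv_val := by
    have h0 : single i j (-c) * single i j c = 0 :=
      single_mul_single_of_ne _ _ _ _ h.symm _
    have h1 : single i j (-c) + single i j c = 0 := by
      rw [← single_add]; simp
    rw [mul_add, add_mul, add_mul, mul_one, one_mul, h0]
    rw [mul_one, add_zero, add_assoc, h1, add_zero]

def diagU {R : Type*} [Ring R] (u v : Rˣ) : (Matrix (Fin 2) (Fin 2) R)ˣ where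
  val := diagonal ![(u : R), (v : R)]
  inv := diagonal ![((u⁻¹ : Rˣ) : R), ((v⁻¹ : Rˣ) : R)]
  val_inv := by
    rw [diagonal_mul_diagonal]
    ext i j
    fin_cases i <;> fin_cases j <;> simp
  inv_val := by
    rw [diagonal_mul_diagonal]
    ext i j
    fin_cases i <;> fin_cases j <;> simp

/-- Over a ring with stable range 1, every invertible `2 × 2` matrix lies in the
subgroup generated by elementary matrices and diagonal matrices with unit
diagonal entries. -/
theorem GE2_of_stableRangeOne
    (R : Type*) [Ring R]
    (hsr : ∀ a b : R, (∃ x y : R, a * x + b * y = 1) →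
      ∃ x : R, IsUnit (a + b * x)) :
    ∀ M : (Matrix (Fin 2) (Fin 2) R)ˣ,
      M ∈ Subgroup.closure
        {N : (Matrix (Fin 2) (Fin 2) R)ˣ |
          (∃ (i j : Fin 2) (c : R), i ≠ j ∧
            N.val = 1 + Matrix.single i j c) ∨
          (∃ u v : Rˣ,
            N.val = Matrix.diagonal ![(u : R), (v : R)])} := by
  intro M
  obtain ⟨t, ht⟩ := hsr (M.val 0 0) (M.val 0 1) ⟨M.inv 0 0, M.inv 1 0, by
    have h := Matrix.ext_iff.mpr M.val_inv 0 0
    rw [Matrix.mul_apply, Fin.sum_univ_two, Matrix.one_apply_eq] at h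
    exact h⟩
  obtain ⟨u, hu⟩ := ht
  set E1 := elemU (R := R) 1 0 (by decide) t with hE1
  set E2 := elemU (R := R) 1 0 (by decide)
    (-((M.val 1 0 + M.val 1 1 * t) * ((u⁻¹ : Rˣ) : R))) with hE2
  set E3 := elemU (R := R) 0 1 (by decide) (-(((u⁻¹ : Rˣ) : R) * M.val 0 1)) with hE3
  set d' := M.val 1 1 - (M.val 1 0 + M.val 1 1 * t) * ((u⁻¹ : Rˣ) : R) * M.val 0 1 with hd'
  have e1 : E1.val = !![1, 0; t, 1] := by
    rw [hE1]
    ext i j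
    fin_cases i <;> fin_cases j <;> simp [elemU, Matrix.single, Matrix.one_apply]
  have e2 : E2.val = !![1, 0; -((M.val 1 0 + M.val 1 1 * t) * ((u⁻¹ : Rˣ) : R)), 1] := by
    rw [hE2]
    ext i j
    fin_cases i <;> fin_cases j <;> simp [elemU, Matrix.single, Matrix.one_apply]
  have e3 : E3.val = !![1, -(((u⁻¹ : Rˣ) : R) * M.val 0 1); 0, 1] := by
    rw [hE3]
    ext i j
    fin_cases i <;> fin_cases j <;> simp [elemU, Matrix.single, Matrix.one_apply]
  have hdg : Matrix.diagonal ![(u : R), d'] = !![(u : R), 0; 0, d'] := by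
    ext i j
    fin_cases i <;> fin_cases j <;> simp
  have hzero : -((M.val 1 0 + M.val 1 1 * t) * ((u⁻¹ : Rˣ) : R) * M.val 0 0) + M.val 1 0 +
      (-((M.val 1 0 + M.val 1 1 * t) * ((u⁻¹ : Rˣ) : R) * M.val 0 1) + M.val 1 1) * t = 0 := by
    have h3 : -((M.val 1 0 + M.val 1 1 * t) * ((u⁻¹ : Rˣ) : R) * M.val 0 0) + M.val 1 0 +
        (-((M.val 1 0 + M.val 1 1 * t) * ((u⁻¹ : Rˣ) : R) * M.val 0 1) + M.val 1 1) * t =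
        -((M.val 1 0 + M.val 1 1 * t) * ((u⁻¹ : Rˣ) : R) * (M.val 0 0 + M.val 0 1 * t)) +
          (M.val 1 0 + M.val 1 1 * t) := by noncomm_ring
    rw [h3, ← hu, Units.inv_mul_cancel_right, neg_add_cancel]
  set N := E2 * M * E1 * E3 with hN
  have key : N.val = Matrix.diagonal ![(u : R), d'] := by
    show (E2.val * M.val * E1.val * E3.val) = _
    rw [e1, e2, e3, hdg, Matrix.eta_fin_two M.val]
    rw [Matrix.mul_fin_two, Matrix.mul_fin_two, Matrix.mul_fin_two]
    ext i j
    fin_cases i <;> fin_cases j <;> simp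
    · exact hu.symm
    · rw [← hu, Units.mul_inv_cancel_left, neg_add_cancel]
    · exact hzero
    · rw [hzero, zero_mul, neg_zero, zero_add, hd']
      noncomm_ring
  have hv1 : d' * N.inv 1 1 = 1 := by
    have h := Matrix.ext_iff.mpr N.val_inv 1 1
    rw [key, Matrix.mul_apply, Fin.sum_univ_two, Matrix.one_apply_eq,
      Matrix.diagonal_apply_ne _ (by decide), Matrix.diagonal_apply_eq,
      zero_mul, zero_add, Matrix.cons_val_one, Matrix.cons_val_zero] at h
    exact h
  have hv2 : N.inv 1 1 * d' = 1 := by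
    have h := Matrix.ext_iff.mpr N.inv_val 1 1
    rw [key, Matrix.mul_apply, Fin.sum_univ_two, Matrix.one_apply_eq,
      Matrix.diagonal_apply_ne _ (by decide), Matrix.diagonal_apply_eq,
      mul_zero, zero_add, Matrix.cons_val_one, Matrix.cons_val_zero] at h
    exact h
  have hNmem : N ∈ Subgroup.closure
      {N : (Matrix (Fin 2) (Fin 2) R)ˣ |
        (∃ (i j : Fin 2) (c : R), i ≠ j ∧
          N.val = 1 + Matrix.single i j c) ∨
        (∃ u v : Rˣ,
          N.val = Matrix.diagonal ![(u : R), (v : R)])} :=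
    Subgroup.subset_closure (Or.inr ⟨u, ⟨d', N.inv 1 1, hv1, hv2⟩, key⟩)
  have hE1mem : E1 ∈ Subgroup.closure
      {N : (Matrix (Fin 2) (Fin 2) R)ˣ |
        (∃ (i j : Fin 2) (c : R), i ≠ j ∧
          N.val = 1 + Matrix.single i j c) ∨
        (∃ u v : Rˣ,
          N.val = Matrix.diagonal ![(u : R), (v : R)])} :=
    Subgroup.subset_closure (Or.inl ⟨1, 0, t, by decide, rfl⟩)
  have hE2mem : E2 ∈ Subgroup.closure
      {N : (Matrix (Fin 2) (Fin 2) R)ˣ |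
        (∃ (i j : Fin 2) (c : R), i ≠ j ∧
          N.val = 1 + Matrix.single i j c) ∨
        (∃ u v : Rˣ,
          N.val = Matrix.diagonal ![(u : R), (v : R)])} :=
    Subgroup.subset_closure (Or.inl ⟨1, 0, _, by decide, rfl⟩)
  have hE3mem : E3 ∈ Subgroup.closure
      {N : (Matrix (Fin 2) (Fin 2) R)ˣ |
        (∃ (i j : Fin 2) (c : R), i ≠ j ∧
          N.val = 1 + Matrix.single i j c) ∨
        (∃ u v : Rˣ,
          N.val = Matrix.diagonal ![(u : R), (v : R)])} :=
    Subgroup.subset_closure (Or.inl ⟨0, 1, _, by decide, rfl⟩)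
  have hMeq : M = E2⁻¹ * N * E3⁻¹ * E1⁻¹ := by rw [hN]; group
  rw [hMeq]
  exact Subgroup.mul_mem _ (Subgroup.mul_mem _ (Subgroup.mul_mem _
    (Subgroup.inv_mem _ hE2mem) hNmem) (Subgroup.inv_mem _ hE3mem))
    (Subgroup.inv_mem _ hE1mem)
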